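/- Let O be the maximal order of the previous context (p ≡ 3 mod 4, p > 3). The group G = {g ∈ M_2(O) : g⁺g = I}, where g⁺ is the conjugate-transpose, consists exactly of the 32 matrices of the form (u 0; 0 v) and (0 u; v 0) with u, v ∈ {±1, ±i}. -/

import Mathlib

open Quaternion

/-- The quaternion `i` in `B_{p,∞} = ℍ[ℚ, −1, −p]`. -/
def qi (p : ℕ) : ℍ[ℚ, -1, -(p : ℚ)] := ⟨0, 1, 0, 0⟩

/-- The quaternion `j` in `B_{p,∞} = ℍ[ℚ, −1, −p]`. -/
def qj (p : ℕ) : ℍ[ℚ, -1, -(p : ℚ)] := ⟨0, 0, 1, 0⟩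

/-- The quaternion `k = ij` in `B_{p,∞} = ℍ[ℚ, −1, −p]`. -/
def qk (p : ℕ) : ℍ[ℚ, -1, -(p : ℚ)] := qi p * qj p

/-- Membership in the maximal order `O = Z + Zi + Z(1+j)/2 + Z(i+k)/2`. -/
def memO1728 (p : ℕ) (α : ℍ[ℚ, -1, -(p : ℚ)]) : Prop :=
  ∃ x y z w : ℤ, α = (x : ℚ) • 1 + (y : ℚ) • qi p + ((z : ℚ) / 2) • (1 + qj p)
    + ((w : ℚ) / 2) • (qi p + qk p)

/-- The reduced norm of a quaternion in `ℍ[ℚ, −1, −p]`. -/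
def qN (p : ℕ) (a : ℍ[ℚ, -1, -(p:ℚ)]) : ℚ :=
  a.re^2 + a.imI^2 + p*a.imJ^2 + p*a.imK^2

lemma qN_nonneg (p : ℕ) (a : ℍ[ℚ, -1, -(p:ℚ)]) : 0 ≤ qN p a := by
  unfold qN; positivity

lemma star_mul_self_re (p : ℕ) (a : ℍ[ℚ, -1, -(p:ℚ)]) :
    (star a * a).re = qN p a := by
  simp [QuaternionAlgebra.re_mul, qN]; ring

lemma mul_star_eq (p : ℕ) (u : ℍ[ℚ,-1,-(p:ℚ)])
    (hu : u = 1 ∨ u = -1 ∨ u = qi p ∨ u = -(qi p)) :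
    u * star u = 1 ∧ star u * u = 1 := by
  rcases hu with h|h|h|h <;> subst h <;> constructor <;> ext <;> simp [qi]

lemma classify (p : ℕ) (hp7 : 7 ≤ (p:ℚ)) (α : ℍ[ℚ, -1, -(p:ℚ)])
    (hm : memO1728 p α) (hle : qN p α ≤ 1) :
    (α = 0 ∧ qN p α = 0) ∨
    ((α = 1 ∨ α = -1 ∨ α = qi p ∨ α = -(qi p)) ∧ qN p α = 1) := by
  obtain ⟨x, y, z, w, h⟩ := hm
  have hre : α.re = (x:ℚ) + z/2 := by rw [h]; simp [qi, qj, qk]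
  have himI : α.imI = (y:ℚ) + w/2 := by rw [h]; simp [qi, qj, qk]
  have himJ : α.imJ = (z:ℚ)/2 := by rw [h]; simp [qi, qj, qk]
  have himK : α.imK = (w:ℚ)/2 := by rw [h]; simp [qi, qj, qk]
  unfold qN at hle ⊢
  rw [hre, himI, himJ, himK] at hle
  have hz : z = 0 := by
    by_contra hz0
    have h1 : (1:ℚ) ≤ (z:ℚ)^2 := by
      have : (1:ℤ) ≤ z^2 := by nlinarith [Int.one_le_abs hz0, sq_abs z]
      exact_mod_cast this
    nlinarith [sq_nonneg ((x:ℚ)+z/2), sq_nonneg ((y:ℚ)+w/2), sq_nonneg (w:ℚ),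
      mul_le_mul_of_nonneg_right hp7 (sq_nonneg (z:ℚ))]
  have hw : w = 0 := by
    by_contra hw0
    have h1 : (1:ℚ) ≤ (w:ℚ)^2 := by
      have : (1:ℤ) ≤ w^2 := by nlinarith [Int.one_le_abs hw0, sq_abs w]
      exact_mod_cast this
    nlinarith [sq_nonneg ((x:ℚ)+z/2), sq_nonneg ((y:ℚ)+w/2), sq_nonneg (z:ℚ),
      mul_le_mul_of_nonneg_right hp7 (sq_nonneg (w:ℚ))]
  subst hz; subst hw
  norm_num at hre himI himJ himK hle
  have hxyZ : x^2 + y^2 ≤ 1 := by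
    exact_mod_cast (by push_cast; linarith : ((x^2+y^2:ℤ):ℚ) ≤ ((1:ℤ):ℚ))
  have hx1 : -1 ≤ x := by nlinarith [sq_nonneg y]
  have hx2 : x ≤ 1 := by nlinarith [sq_nonneg y]
  have hy1 : -1 ≤ y := by nlinarith [sq_nonneg x]
  have hy2 : y ≤ 1 := by nlinarith [sq_nonneg x]
  interval_cases x <;> interval_cases y <;> norm_num at hxyZ <;> norm_num at hre himI ⊢ <;>
    first
    | (refine Or.inl ⟨?_, ?_⟩
       · ext <;> simp [hre, himI, himJ, himK]
       · rw [hre, himI, himJ, himK]; norm_num)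
    | (refine Or.inr ⟨Or.inl ?_, ?_⟩
       · ext <;> simp [hre, himI, himJ, himK]
       · rw [hre, himI, himJ, himK]; norm_num)
    | (refine Or.inr ⟨Or.inr (Or.inl ?_), ?_⟩
       · ext <;> simp [hre, himI, himJ, himK]
       · rw [hre, himI, himJ, himK]; norm_num)
    | (refine Or.inr ⟨Or.inr (Or.inr (Or.inl ?_)), ?_⟩
       · ext <;> simp [qi, hre, himI, himJ, himK]
       · rw [hre, himI, himJ, himK]; norm_num)
    | (refine Or.inr ⟨Or.inr (Or.inr (Or.inr ?_)), ?_⟩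
       · ext <;> simp [qi, hre, himI, himJ, himK]
       · rw [hre, himI, himJ, himK]; norm_num)

/-- For `p ≡ 3 (mod 4)`, `p > 3`, the group `G = {g ∈ M₂(O) : g⁺g = I}` (with `g⁺`
the quaternionic conjugate transpose) consists exactly of the `32` matrices
`(u 0; 0 v)` and `(0 u; v 0)` with `u, v ∈ {±1, ±i}`. -/
theorem aut_E1728_sq (p : ℕ) (hp : p.Prime) (hp4 : p % 4 = 3) (hp3 : 3 < p)
    (g : Matrix (Fin 2) (Fin 2) ℍ[ℚ, -1, -(p : ℚ)]) (hg : ∀ i j, memO1728 p (g i j)) :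
    g.conjTranspose * g = 1 ↔
      ∃ u v : ℍ[ℚ, -1, -(p : ℚ)],
        u ∈ ({1, -1, qi p, -(qi p)} : Set ℍ[ℚ, -1, -(p : ℚ)]) ∧
        v ∈ ({1, -1, qi p, -(qi p)} : Set ℍ[ℚ, -1, -(p : ℚ)]) ∧
        (g = !![u, 0; 0, v] ∨ g = !![0, u; v, 0]) := by
  have hp7 : 7 ≤ (p:ℚ) := by
    have : 7 ≤ p := by omega
    exact_mod_cast this
  constructor
  · intro hgI
    have key : ∀ i j : Fin 2,
        star (g 0 i) * g 0 j + star (g 1 i) * g 1 j = if i = j then 1 else 0 := by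
      intro i j
      have h := congrFun (congrFun hgI i) j
      simpa [Matrix.mul_apply, Matrix.conjTranspose_apply, Fin.sum_univ_two,
        Matrix.one_apply] using h
    have k00 : star (g 0 0) * g 0 0 + star (g 1 0) * g 1 0 = 1 := by
      simpa using key 0 0
    have k11 : star (g 0 1) * g 0 1 + star (g 1 1) * g 1 1 = 1 := by
      simpa using key 1 1
    have hs0 : qN p (g 0 0) + qN p (g 1 0) = 1 := by
      have h := congrArg QuaternionAlgebra.re k00
      simp only [QuaternionAlgebra.re_add, star_mul_self_re p,
        QuaternionAlgebra.re_one] at h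
      exact h
    have hs1 : qN p (g 0 1) + qN p (g 1 1) = 1 := by
      have h := congrArg QuaternionAlgebra.re k11
      simp only [QuaternionAlgebra.re_add, star_mul_self_re p,
        QuaternionAlgebra.re_one] at h
      exact h
    have c00 := classify p hp7 _ (hg 0 0)
      (by nlinarith [qN_nonneg p (g 1 0)])
    have c10 := classify p hp7 _ (hg 1 0)
      (by nlinarith [qN_nonneg p (g 0 0)])
    have c01 := classify p hp7 _ (hg 0 1)
      (by nlinarith [qN_nonneg p (g 1 1)])
    have c11 := classify p hp7 _ (hg 1 1)
      (by nlinarith [qN_nonneg p (g 0 1)])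
    have k01 : star (g 0 0) * g 0 1 + star (g 1 0) * g 1 1 = 0 := by
      simpa using key 0 1
    rcases c00 with ⟨e00, n00⟩ | ⟨e00, n00⟩ <;>
      rcases c10 with ⟨e10, n10⟩ | ⟨e10, n10⟩
    · exfalso; rw [n00, n10] at hs0; norm_num at hs0
    · -- column 0 = (0, v)
      rcases c01 with ⟨e01, n01⟩ | ⟨e01, n01⟩ <;>
        rcases c11 with ⟨e11, n11⟩ | ⟨e11, n11⟩
      · exfalso; rw [n01, n11] at hs1; norm_num at hs1
      · -- column 1 = (0, v') : contradiction via orthogonality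
        exfalso
        rw [e00, e01] at k01
        simp only [star_zero, zero_mul, mul_zero, zero_add] at k01
        have hm10 := (mul_star_eq p _ e10).1
        have h0 : g 1 1 = 0 := by
          have h2 := congrArg (fun t => g 1 0 * t) k01
          simpa [← mul_assoc, hm10] using h2
        rw [h0] at n11; simp [qN] at n11
      · -- column 1 = (u, 0) : antidiagonal
        refine ⟨g 0 1, g 1 0, by simpa using e01, by simpa using e10, Or.inr ?_⟩
        conv_lhs => rw [Matrix.eta_fin_two g]
        rw [e00, e11]
      · exfalso; rw [n01, n11] at hs1; norm_num at hs1
    · -- column 0 = (u, 0)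
      rcases c01 with ⟨e01, n01⟩ | ⟨e01, n01⟩ <;>
        rcases c11 with ⟨e11, n11⟩ | ⟨e11, n11⟩
      · exfalso; rw [n01, n11] at hs1; norm_num at hs1
      · -- column 1 = (0, v) : diagonal
        refine ⟨g 0 0, g 1 1, by simpa using e00, by simpa using e11, Or.inl ?_⟩
        conv_lhs => rw [Matrix.eta_fin_two g]
        rw [e10, e01]
      · -- column 1 = (u', 0) : contradiction
        exfalso
        rw [e10, e11] at k01
        simp only [star_zero, zero_mul, mul_zero, add_zero] at k01
        have hm00 := (mul_star_eq p _ e00).1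
        have h0 : g 0 1 = 0 := by
          have h2 := congrArg (fun t => g 0 0 * t) k01
          simpa [← mul_assoc, hm00] using h2
        rw [h0] at n01; simp [qN] at n01
      · exfalso; rw [n01, n11] at hs1; norm_num at hs1
    · exfalso; rw [n00, n10] at hs0; norm_num at hs0
  · rintro ⟨u, v, hu, hv, rfl | rfl⟩ <;>
      simp only [Set.mem_insert_iff, Set.mem_singleton_iff] at hu hv
    · have su := (mul_star_eq p u hu).2
      have sv := (mul_star_eq p v hv).2
      apply Matrix.ext
      intro i j
      fin_cases i <;> fin_cases j <;>
        simp [Matrix.mul_apply, Matrix.conjTranspose_apply, Fin.sum_univ_two,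
          Matrix.one_apply, su, sv]
    · have su := (mul_star_eq p u hu).2
      have sv := (mul_star_eq p v hv).2
      apply Matrix.ext
      intro i j
      fin_cases i <;> fin_cases j <;>
        simp [Matrix.mul_apply, Matrix.conjTranspose_apply, Fin.sum_univ_two,
          Matrix.one_apply, su, sv]
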